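/- Let $\gamma_1,\gamma_2:[-\delta,\delta]\to\mathbb{R}$ be $C^1$ curves solving $\dot\gamma_i(s)=f(s,\gamma_i(s))$ for a continuous $f$, and assume each $s\mapsto f(s,\gamma_i(s))$ is differentiable a.e. with derivative bounded by $L$. Set $\tau_i=\gamma_i(0)$, $f_0(\tau)=f(0,\tau)$, and suppose $\tau_2<\tau_1$ and $f_0(\tau_1)-f_0(\tau_2)<-\alpha\sqrt{\tau_1-\tau_2}$ with $\alpha>0$ satisfying $8L\le\alpha^2$ and $\bar s:=2\sqrt{\tau_1-\tau_2}/\alpha\le\delta$. Then there exists $s^*\in(0,\bar s)$ with $\gamma_1(s^*)=\gamma_2(s^*)$. -/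

import Mathlib

open Set Real

theorem stmt12 (f : ℝ × ℝ → ℝ) (hf : Continuous f)
    (δ L α : ℝ) (hδ : 0 < δ) (hL : 0 ≤ L) (hα : 0 < α) (hα2 : 8 * L ≤ α ^ 2)
    (γ₁ γ₂ : ℝ → ℝ)
    (h1 : ∀ s ∈ Icc (-δ) δ, HasDerivAt γ₁ (f (s, γ₁ s)) s)
    (h2 : ∀ s ∈ Icc (-δ) δ, HasDerivAt γ₂ (f (s, γ₂ s)) s)
    (hlip1 : ∀ s ∈ Icc (-δ) δ, ∀ s' ∈ Icc (-δ) δ,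
      |f (s, γ₁ s) - f (s', γ₁ s')| ≤ L * |s - s'|)
    (hlip2 : ∀ s ∈ Icc (-δ) δ, ∀ s' ∈ Icc (-δ) δ,
      |f (s, γ₂ s) - f (s', γ₂ s')| ≤ L * |s - s'|)
    (τ₁ τ₂ : ℝ) (hτ1 : γ₁ 0 = τ₁) (hτ2 : γ₂ 0 = τ₂) (hlt : τ₂ < τ₁)
    (hgap : f (0, τ₁) - f (0, τ₂) < -α * Real.sqrt (τ₁ - τ₂))
    (hbars : 2 * Real.sqrt (τ₁ - τ₂) / α ≤ δ) :
    ∃ s' ∈ Ioo (0:ℝ) (2 * Real.sqrt (τ₁ - τ₂) / α), γ₁ s' = γ₂ s' := by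
  set r : ℝ := Real.sqrt (τ₁ - τ₂) with hrdef
  have hΔ : 0 < τ₁ - τ₂ := sub_pos.mpr hlt
  have hr : 0 < r := Real.sqrt_pos.mpr hΔ
  have hr2 : r ^ 2 = τ₁ - τ₂ := Real.sq_sqrt hΔ.le
  set b : ℝ := 2 * r / α with hbdef
  have hb : 0 < b := by positivity
  have hsub : Icc (0:ℝ) b ⊆ Icc (-δ) δ := fun x hx =>
    ⟨by linarith [hx.1], le_trans hx.2 hbars⟩
  -- Taylor-type bound for each curve
  have key : ∀ (γ : ℝ → ℝ), (∀ s ∈ Icc (-δ) δ, HasDerivAt γ (f (s, γ s)) s) →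
      (∀ s ∈ Icc (-δ) δ, ∀ s' ∈ Icc (-δ) δ,
        |f (s, γ s) - f (s', γ s')| ≤ L * |s - s'|) →
      |γ b - γ 0 - f (0, γ 0) * b| ≤ L * b * b := by
    intro γ hder hlip
    set u : ℝ → ℝ := fun s => γ s - f (0, γ 0) * s with hu
    have h0mem : (0:ℝ) ∈ Icc (-δ) δ := ⟨by linarith, by linarith⟩
    have hud : ∀ x ∈ Icc (0:ℝ) b,
        HasDerivWithinAt u (f (x, γ x) - f (0, γ 0)) (Icc (0:ℝ) b) x := by
      intro x hx
      exact (((hder x (hsub hx)).sub ((hasDerivAt_id x).const_mul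
        (f (0, γ 0)))).congr_deriv (by ring)).hasDerivWithinAt
    have hbound : ∀ x ∈ Icc (0:ℝ) b, ‖f (x, γ x) - f (0, γ 0)‖ ≤ L * b := by
      intro x hx
      calc ‖f (x, γ x) - f (0, γ 0)‖ ≤ L * |x - 0| := hlip x (hsub hx) 0 h0mem
        _ ≤ L * b := by
            rw [sub_zero, abs_of_nonneg hx.1]
            exact mul_le_mul_of_nonneg_left hx.2 hL
    have := (convex_Icc (0:ℝ) b).norm_image_sub_le_of_norm_hasDerivWithin_le
      hud hbound (left_mem_Icc.mpr hb.le) (right_mem_Icc.mpr hb.le)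
    have h' : |u b - u 0| ≤ L * b * b := by
      simpa [Real.norm_eq_abs, abs_of_nonneg hb.le] using this
    have : γ b - γ 0 - f (0, γ 0) * b = u b - u 0 := by simp [hu]; ring
    rw [this]; exact h'
  have k1 := key γ₁ h1 hlip1
  have k2 := key γ₂ h2 hlip2
  rw [hτ1] at k1
  rw [hτ2] at k2
  -- γ₁ b - γ₂ b < 0
  have hgb : γ₁ b - γ₂ b < 0 := by
    have a1 := abs_le.mp k1
    have a2 := abs_le.mp k2
    have hgap' : (f (0, τ₁) - f (0, τ₂)) * b < -α * r * b := by
      exact mul_lt_mul_of_pos_right hgap hb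
    have hbval : α * r * b = 2 * r ^ 2 := by
      field_simp [hbdef]; rw [hbdef, mul_div_assoc', div_eq_iff hα.ne']; ring
    have hb2 : L * b * b ≤ (τ₁ - τ₂) / 2 := by
      have hbb : b * b * α ^ 2 = 4 * (τ₁ - τ₂) := by
        rw [hbdef]; field_simp; nlinarith [hr2]
      nlinarith [mul_le_mul_of_nonneg_right hα2 (mul_nonneg hb.le hb.le), hbb]
    nlinarith [a1.1, a1.2, a2.1, a2.2, hr2]
  have hg0 : 0 < γ₁ 0 - γ₂ 0 := by rw [hτ1, hτ2]; linarith
  -- IVT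
  have hc : ContinuousOn (fun s => γ₁ s - γ₂ s) (Icc 0 b) := by
    intro x hx
    exact (((h1 x (hsub hx)).continuousAt.sub
      (h2 x (hsub hx)).continuousAt)).continuousWithinAt
  have hmem : (0:ℝ) ∈ Ioo ((fun s => γ₁ s - γ₂ s) b) ((fun s => γ₁ s - γ₂ s) 0) :=
    ⟨hgb, hg0⟩
  obtain ⟨s', hs', hval⟩ := intermediate_value_Ioo' hb.le hc hmem
  exact ⟨s', hs', sub_eq_zero.mp hval⟩
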